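/- Let N > 1, κ ∈ {−1, 0, 1}, K = κ(N−1), λ ∈ (0,1], and L > 0, with L < π in the case κ = 1. Then for every ε > 0 there exists v̄ > 0, depending only on N, λ, L, ε, such that for every D ∈ [λL, L] and every a ∈ (0, D), if v := v_{K,N,D}(a) < v̄ then |a / (k_D v)^{1/N} − 1| ≤ ε; i.e. the inverse a_{K,N,D}(v) of the volume map satisfies a_{K,N,D}(v) = k_D^{1/N} v^{1/N} (1 + o(1)) as v → 0⁺, uniformly in D ∈ [λL, L]. -/

import Mathlib

open MeasureTheory Filter Set

/-- The function `s_κ`. -/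
noncomputable def sK (κ θ : ℝ) : ℝ :=
  if 0 < κ then Real.sin (Real.sqrt κ * θ) / Real.sqrt κ
  else if κ = 0 then θ
  else Real.sinh (Real.sqrt (-κ) * θ) / Real.sqrt (-κ)

/-- `k_D = ∫₀^D s_κ(t)^(N-1) dt`. -/
noncomputable def kD (κ N D : ℝ) : ℝ := ∫ t in (0:ℝ)..D, sK κ t ^ (N - 1)

/-- The function `f_{K,N,D}` (with `K = κ(N-1)`). -/
noncomputable def fKND (κ N D x : ℝ) : ℝ :=
  ((∫ y in (0:ℝ)..x, (sK κ (D - y) / sK κ (D - x)) ^ (N - 1)) +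
    ∫ y in x..D, (sK κ y / sK κ x) ^ (N - 1))⁻¹

/-- The model density `h^a_{K,N,D}` (with `K = κ(N-1)`). -/
noncomputable def hKND (κ N D a x : ℝ) : ℝ :=
  if x ≤ a then fKND κ N D a * (sK κ (D - x) / sK κ (D - a)) ^ (N - 1)
  else fKND κ N D a * (sK κ x / sK κ a) ^ (N - 1)

/-- The volume map `v_{K,N,D}(a) = ∫₀^a h^a_{K,N,D}`. -/
noncomputable def vKND (κ N D a : ℝ) : ℝ := ∫ x in (0:ℝ)..a, hKND κ N D a x

/-- `ω_N = π^(N/2)/Γ(N/2+1)`. -/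
noncomputable def omegaN (N : ℝ) : ℝ := Real.pi ^ (N / 2) / Real.Gamma (N / 2 + 1)

/-- `Vol_{K,N}(r) = N ω_N ∫₀^r s_κ(t)^(N-1) dt` (with `K = κ(N-1)`). -/
noncomputable def VolKN (κ N r : ℝ) : ℝ := N * omegaN N * ∫ t in (0:ℝ)..r, sK κ t ^ (N - 1)

/-- The coefficient `σ^{(s)}_{K,N-1}(θ)`, valued in `[0,∞]`. -/
noncomputable def sigmaE (K N s θ : ℝ) : ENNReal :=
  if (N - 1) * Real.pi ^ 2 ≤ K * θ ^ 2 then ⊤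
  else ENNReal.ofReal (sK (K / (N - 1)) (s * θ) / sK (K / (N - 1)) θ)

/-- A nonnegative continuous function `h` on the interval `I` is an `MCP(K,N)` density. -/
def IsMCPDensity (K N : ℝ) (I : Set ℝ) (h : ℝ → ℝ) : Prop :=
  ContinuousOn h I ∧ (∀ x ∈ I, 0 ≤ h x) ∧
    ∀ x₀ ∈ I, ∀ x₁ ∈ I, ∀ t ∈ Set.Icc (0:ℝ) 1,
      sigmaE K N (1 - t) |x₁ - x₀| ^ (N - 1) * ENNReal.ofReal (h x₀) ≤
        ENNReal.ofReal (h (t * x₁ + (1 - t) * x₀))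

/-- The measure `h·𝓛¹` restricted to `[0,D]`. -/
noncomputable def mcMeasure (D : ℝ) (h : ℝ → ℝ) : Measure ℝ :=
  (volume.restrict (Set.Icc 0 D)).withDensity fun x => ENNReal.ofReal (h x)

/-- The outer Minkowski content `μ⁺(E) = liminf_{ρ→0⁺} (μ(E^ρ) - μ(E))/ρ`. -/
noncomputable def minkContent (μ : Measure ℝ) (E : Set ℝ) : ℝ :=
  Filter.liminf (fun ρ : ℝ => ((μ (Metric.thickening ρ E)).toReal - (μ E).toReal) / ρ)
    (nhdsWithin 0 (Set.Ioi 0))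

lemma sK_one : sK 1 = Real.sin := by funext t; simp [sK]

lemma sK_zero : sK 0 = fun t => t := by funext t; simp [sK]

lemma sK_neg_one : sK (-1) = Real.sinh := by funext t; simp [sK]

lemma abs_sin_le (x : ℝ) : |Real.sin x| ≤ |x| := by
  wlog h : 0 ≤ x with H
  · push_neg at h
    have := H (-x) (by linarith)
    simpa [Real.sin_neg, abs_neg] using this
  rw [abs_of_nonneg h]
  rcases le_or_gt x 1 with h1 | h1
  · rw [abs_of_nonneg (Real.sin_nonneg_of_nonneg_of_le_pi h
      (h1.trans (by linarith [Real.pi_gt_three])))]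
    exact Real.sin_le h
  · exact (Real.abs_sin_le_one x).trans h1.le

lemma sin_lip (u v : ℝ) : |Real.sin u - Real.sin v| ≤ |u - v| := by
  rw [Real.sin_sub_sin]
  have h1 := abs_sin_le ((u - v) / 2)
  have h2 := Real.abs_cos_le_one ((u + v) / 2)
  have h3 : |(u - v) / 2| = |u - v| / 2 := by rw [abs_div]; norm_num
  rw [abs_mul, abs_mul, abs_two]
  rw [h3] at h1
  nlinarith [abs_nonneg (Real.sin ((u - v) / 2)), abs_nonneg (Real.cos ((u + v) / 2)),
    abs_nonneg (u - v)]

lemma sin_lb {L t : ℝ} (hL : 0 < L) (hLπ : L < Real.pi) (ht : t ∈ Icc 0 L) :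
    Real.sin L / L * t ≤ Real.sin t := by
  obtain ⟨ht0, htL⟩ := ht
  have hbd : t / L ≤ 1 := (div_le_one hL).2 htL
  have hb0 : 0 ≤ t / L := by positivity
  have h := strictConcaveOn_sin_Icc.concaveOn.2
    (⟨le_rfl, Real.pi_pos.le⟩ : (0:ℝ) ∈ Icc 0 Real.pi)
    (⟨hL.le, hLπ.le⟩ : L ∈ Icc 0 Real.pi)
    (by linarith : (0:ℝ) ≤ 1 - t / L) hb0 (by ring : 1 - t / L + t / L = 1)
  simp only [smul_eq_mul, mul_zero, Real.sin_zero, zero_add] at h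
  have ht' : t / L * L = t := by field_simp
  rw [ht'] at h
  calc Real.sin L / L * t = t / L * Real.sin L := by ring
    _ ≤ Real.sin t := h

lemma sinh_le_mul_cosh {t : ℝ} (ht : 0 ≤ t) : Real.sinh t ≤ t * Real.cosh t := by
  have key : MonotoneOn (fun x => x * Real.cosh x - Real.sinh x) (Set.Ici (0:ℝ)) := by
    apply monotoneOn_of_deriv_nonneg (convex_Ici 0)
    · exact ((continuous_id.mul Real.continuous_cosh).sub Real.continuous_sinh).continuousOn
    · apply Differentiable.differentiableOn
      exact (differentiable_id.mul Real.differentiable_cosh).sub Real.differentiable_sinh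
    · intro x hx
      rw [interior_Ici] at hx
      have hd : HasDerivAt (fun x => x * Real.cosh x - Real.sinh x)
          (1 * Real.cosh x + x * Real.sinh x - Real.cosh x) x :=
        ((hasDerivAt_id x).mul (Real.hasDerivAt_cosh x)).sub (Real.hasDerivAt_sinh x)
      rw [hd.deriv]
      have h1 : 0 ≤ Real.sinh x := Real.sinh_nonneg_iff.2 (le_of_lt hx)
      nlinarith [le_of_lt (show (0:ℝ) < x from hx)]
  have := key (self_mem_Ici) (mem_Ici.2 ht) ht
  simp only [Real.sinh_zero, Real.cosh_zero, mul_one, zero_mul, sub_zero, zero_sub] at this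
  linarith

lemma cosh_le_inv_one_sub {t : ℝ} (ht : 0 ≤ t) (ht1 : t < 1) : Real.cosh t ≤ 1 / (1 - t) := by
  have h1 : Real.cosh t ≤ Real.exp t := by
    rw [Real.cosh_eq]
    have : Real.exp (-t) ≤ Real.exp t := Real.exp_le_exp.2 (by linarith)
    linarith
  have h2 : 1 - t ≤ Real.exp (-t) := by linarith [Real.add_one_le_exp (-t)]
  have h3 : Real.exp t * (1 - t) ≤ 1 := by
    calc Real.exp t * (1 - t) ≤ Real.exp t * Real.exp (-t) := by
          apply mul_le_mul_of_nonneg_left h2 (Real.exp_nonneg t)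
      _ = 1 := by rw [← Real.exp_add]; simp
  rw [le_div_iff₀ (by linarith)]
  calc Real.cosh t * (1 - t) ≤ Real.exp t * (1 - t) := by
        apply mul_le_mul_of_nonneg_right h1 (by linarith)
    _ ≤ 1 := h3

lemma sinh_lip {L u v : ℝ} (hu : u ∈ Icc 0 L) (hv : v ∈ Icc 0 L) :
    |Real.sinh u - Real.sinh v| ≤ (Real.sinh L + Real.cosh L) * Real.cosh L * |u - v| := by
  wlog h : v ≤ u with H
  · push_neg at h
    have := H hv hu h.le
    rwa [abs_sub_comm (Real.sinh v), abs_sub_comm v u] at this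
  obtain ⟨hu0, huL⟩ := hu
  obtain ⟨hv0, hvL⟩ := hv
  have hd0 : 0 ≤ u - v := by linarith
  have hdL : u - v ≤ L := by linarith
  have e1 : Real.sinh u = Real.sinh v * Real.cosh (u - v) + Real.cosh v * Real.sinh (u - v) := by
    rw [← Real.sinh_add]; ring_nf
  have hc1 : Real.cosh (u - v) - 1 ≤ Real.sinh (u - v) := by
    have h1 : Real.cosh (u - v) - Real.sinh (u - v) = Real.exp (-(u - v)) := Real.cosh_sub_sinh _
    have h2 : Real.exp (-(u - v)) ≤ 1 := Real.exp_le_one_iff.2 (by linarith)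
    have h3 : 0 ≤ Real.sinh (u - v) := Real.sinh_nonneg_iff.2 hd0
    linarith
  have hcm : Real.cosh (u - v) ≤ Real.cosh L := by
    rw [Real.cosh_le_cosh, abs_of_nonneg hd0, abs_of_nonneg (hd0.trans hdL)]
    exact hdL
  have hcv : Real.cosh v ≤ Real.cosh L := by
    rw [Real.cosh_le_cosh, abs_of_nonneg hv0, abs_of_nonneg (hv0.trans hvL)]
    exact hvL
  have hsd : Real.sinh (u - v) ≤ (u - v) * Real.cosh L := by
    calc Real.sinh (u - v) ≤ (u - v) * Real.cosh (u - v) := sinh_le_mul_cosh hd0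
      _ ≤ (u - v) * Real.cosh L := mul_le_mul_of_nonneg_left hcm hd0
  have hsv0 : 0 ≤ Real.sinh v := Real.sinh_nonneg_iff.2 hv0
  have hsvL : Real.sinh v ≤ Real.sinh L := Real.sinh_le_sinh.2 hvL
  have hcv0 : 0 < Real.cosh v := Real.cosh_pos _
  have hcL0 : 0 < Real.cosh L := Real.cosh_pos _
  have hmono : Real.sinh v ≤ Real.sinh u := Real.sinh_le_sinh.2 h
  rw [abs_of_nonneg (by linarith : (0:ℝ) ≤ Real.sinh u - Real.sinh v),
    abs_of_nonneg hd0]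
  have hc10 : 0 ≤ Real.cosh (u - v) - 1 := by linarith [Real.one_le_cosh (u - v)]
  have hsd' : Real.cosh (u - v) - 1 ≤ (u - v) * Real.cosh L := by
    have h3 : 0 ≤ Real.sinh (u - v) := Real.sinh_nonneg_iff.2 hd0
    linarith
  nlinarith [mul_le_mul hsvL hsd' hc10 (Real.sinh_nonneg_iff.2 (hv0.trans hvL)),
    mul_le_mul hcv hsd (Real.sinh_nonneg_iff.2 hd0) hcL0.le]

lemma integral_le_const {f : ℝ → ℝ} {a b c : ℝ} (hab : a ≤ b)
    (hf : IntervalIntegrable f volume a b) (h : ∀ x ∈ Icc a b, f x ≤ c) :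
    ∫ x in a..b, f x ≤ (b - a) * c := by
  have := intervalIntegral.integral_mono_on hab hf intervalIntegrable_const h
  simpa [intervalIntegral.integral_const, smul_eq_mul] using this

lemma const_le_integral {f : ℝ → ℝ} {a b c : ℝ} (hab : a ≤ b)
    (hf : IntervalIntegrable f volume a b) (h : ∀ x ∈ Icc a b, c ≤ f x) :
    (b - a) * c ≤ ∫ x in a..b, f x := by
  have := intervalIntegral.integral_mono_on hab intervalIntegrable_const hf h
  simpa [intervalIntegral.integral_const, smul_eq_mul] using this

section choice
variable (N lam L c₁ c₂ M : ℝ)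

lemma choose_delta (N : ℝ) (hN : 1 < N) (ε' s₀ kmin M lamL : ℝ) (hε'0 : 0 < ε')
    (hs₀ : 0 < s₀) (hkmin : 0 < kmin) (hM : 0 < M) (hlamL : 0 < lamL) (c₂ : ℝ) (hc₂ : 0 < c₂) :
    ∃ δ : ℝ, 0 < δ ∧ δ ≤ 1/2 ∧ δ ≤ lamL/2 ∧ M * δ / s₀ ≤ 1/2 ∧
      (δ * (c₂ * δ) ^ (N-1) / kmin) ≤ 1/2 ∧
      1 + (δ ^ N * ((1 + M * δ / s₀) * (1 + 2 * δ)) ^ (N-1) /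
        (kmin * (1 - δ * (c₂ * δ) ^ (N-1) / kmin))) ≤
        (1 + ε') * ((1 - δ) * (1 - M * δ / s₀)) ^ (N-1) ∧
      (1 - ε') * ((1 + 2 * δ) * (1 + M * δ / s₀)) ^ (N-1) ≤
        1 - δ * (c₂ * δ) ^ (N-1) / kmin := by
  have hN1 : (0:ℝ) ≤ N - 1 := by linarith
  have hN1' : N - 1 ≠ 0 := ne_of_gt (by linarith)
  set q : ℝ → ℝ := fun δ => δ * (c₂ * δ) ^ (N-1) / kmin with hqdef
  have t1 : Tendsto (fun δ : ℝ => c₂ * δ) (nhds 0) (nhds 0) := by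
    simpa using (continuous_mul_left c₂).tendsto (0:ℝ)
  have t2 : Tendsto (fun δ : ℝ => (c₂ * δ) ^ (N-1)) (nhds 0) (nhds 0) := by
    have := t1.rpow_const (p := N - 1) (Or.inr hN1)
    rwa [Real.zero_rpow hN1'] at this
  have hq0 : Tendsto q (nhds 0) (nhds 0) := by
    have t3 : Tendsto (fun δ : ℝ => δ * (c₂ * δ) ^ (N-1)) (nhds 0) (nhds 0) := by
      simpa using (tendsto_id.mul t2)
    simpa using t3.div_const kmin
  have tP : Tendsto (fun δ : ℝ => 1 + M * δ / s₀) (nhds 0) (nhds 1) := by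
    have : Tendsto (fun δ : ℝ => M * δ / s₀) (nhds 0) (nhds 0) := by
      simpa using ((continuous_const.mul continuous_id).div_const s₀).tendsto (0:ℝ)
    simpa using (tendsto_const_nhds (x := (1:ℝ))).add this
  have tQ : Tendsto (fun δ : ℝ => 1 + 2 * δ) (nhds 0) (nhds 1) := by
    have : Tendsto (fun δ : ℝ => 2 * δ) (nhds 0) (nhds 0) := by
      simpa using (continuous_mul_left (2:ℝ)).tendsto (0:ℝ)
    simpa using (tendsto_const_nhds (x := (1:ℝ))).add this
  have tmδ : Tendsto (fun δ : ℝ => M * δ / s₀) (nhds 0) (nhds 0) := by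
    simpa using ((continuous_const.mul continuous_id).div_const s₀).tendsto (0:ℝ)
  have tuu : Tendsto (fun δ : ℝ => δ ^ N * ((1 + M * δ / s₀) * (1 + 2 * δ)) ^ (N-1) /
      (kmin * (1 - q δ))) (nhds 0) (nhds 0) := by
    have h1 : Tendsto (fun δ : ℝ => δ ^ N) (nhds 0) (nhds 0) := by
      have := (continuous_id.tendsto (0:ℝ)).rpow_const (p := N) (Or.inr (by linarith))
      simp only [id_eq] at this
      rwa [Real.zero_rpow (by positivity : N ≠ 0)] at this
    have h2 : Tendsto (fun δ : ℝ => ((1 + M * δ / s₀) * (1 + 2 * δ)) ^ (N-1))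
        (nhds 0) (nhds 1) := by
      have := (tP.mul tQ).rpow_const (p := N - 1) (Or.inr hN1)
      simpa using this
    have h3 : Tendsto (fun δ : ℝ => kmin * (1 - q δ)) (nhds 0) (nhds kmin) := by
      have := (tendsto_const_nhds (x := (1:ℝ))).sub hq0
      have := (tendsto_const_nhds (x := kmin)).mul this
      simpa using this
    have := ((h1.mul h2).div h3 (ne_of_gt hkmin))
    rw [zero_mul, zero_div] at this; exact this
  -- eventual conditions
  have ev1 : ∀ᶠ δ : ℝ in nhds 0, δ < 1/2 :=
    Filter.Tendsto.eventually_lt_const (by norm_num : (0:ℝ) < 1/2) (continuous_id.tendsto (0:ℝ))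
  have ev2 : ∀ᶠ δ : ℝ in nhds 0, δ < lamL/2 :=
    Filter.Tendsto.eventually_lt_const (by linarith : (0:ℝ) < lamL/2) (continuous_id.tendsto (0:ℝ))
  have ev3 : ∀ᶠ δ : ℝ in nhds 0, M * δ / s₀ < 1/2 :=
    Filter.Tendsto.eventually_lt_const (by norm_num : (0:ℝ) < 1/2) tmδ
  have ev4 : ∀ᶠ δ : ℝ in nhds 0, q δ < 1/2 :=
    Filter.Tendsto.eventually_lt_const (by norm_num : (0:ℝ) < 1/2) hq0
  have ev5 : ∀ᶠ δ : ℝ in nhds 0,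
      1 + (δ ^ N * ((1 + M * δ / s₀) * (1 + 2 * δ)) ^ (N-1) / (kmin * (1 - q δ))) <
      (1 + ε') * ((1 - δ) * (1 - M * δ / s₀)) ^ (N-1) := by
    apply Filter.Tendsto.eventually_lt (y := (1:ℝ)) (z := 1 + ε')
    · simpa using (tendsto_const_nhds (x := (1:ℝ))).add tuu
    · have hA : Tendsto (fun δ : ℝ => (1 - δ) * (1 - M * δ / s₀)) (nhds 0) (nhds 1) := by
        have u1 : Tendsto (fun δ : ℝ => 1 - δ) (nhds 0) (nhds 1) := by
          simpa using (tendsto_const_nhds (x := (1:ℝ))).sub (continuous_id.tendsto (0:ℝ))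
        have u2 : Tendsto (fun δ : ℝ => 1 - M * δ / s₀) (nhds 0) (nhds 1) := by
          simpa using (tendsto_const_nhds (x := (1:ℝ))).sub tmδ
        simpa using u1.mul u2
      have := hA.rpow_const (p := N - 1) (Or.inr hN1)
      simp only [Real.one_rpow] at this
      simpa using (tendsto_const_nhds (x := 1 + ε')).mul this
    · linarith
  have ev6 : ∀ᶠ δ : ℝ in nhds 0,
      (1 - ε') * ((1 + 2 * δ) * (1 + M * δ / s₀)) ^ (N-1) < 1 - q δ := by
    apply Filter.Tendsto.eventually_lt (y := 1 - ε') (z := (1:ℝ))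
    · have := (tQ.mul tP).rpow_const (p := N - 1) (Or.inr hN1)
      simp only [mul_one, Real.one_rpow] at this
      simpa using (tendsto_const_nhds (x := 1 - ε')).mul this
    · simpa using (tendsto_const_nhds (x := (1:ℝ))).sub hq0
    · linarith
  have hall := ((((ev1.and ev2).and ev3).and ev4).and (ev5.and ev6)).filter_mono
    (nhdsWithin_le_nhds (s := Set.Ioi (0:ℝ)))
  have hpos : ∀ᶠ δ : ℝ in nhdsWithin 0 (Set.Ioi 0), 0 < δ :=
    eventually_mem_nhdsWithin.mono (fun x hx => hx)
  obtain ⟨δ, hδ, hδpos⟩ := (hall.and hpos).exists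
  exact ⟨δ, hδpos, hδ.1.1.1.1.le, hδ.1.1.1.2.le, hδ.1.1.2.le, hδ.1.2.le, hδ.2.1.le, hδ.2.2.le⟩
end choice

set_option maxHeartbeats 2000000 in
lemma core (κ N lam L c₁ c₂ M : ℝ) (hN : 1 < N)
    (hlam0 : 0 < lam) (hlam1 : lam ≤ 1) (hL : 0 < L)
    (hc₁ : 0 < c₁) (hc₁₂ : c₁ ≤ c₂) (hM : 0 < M)
    (hcont : Continuous (sK κ))
    (hP2l : ∀ t ∈ Icc (0:ℝ) L, c₁ * t ≤ sK κ t)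
    (hP2u : ∀ t ∈ Icc (0:ℝ) L, sK κ t ≤ c₂ * t)
    (hP3l : ∀ t ∈ Ioc (0:ℝ) (1/2 : ℝ), t * (1 - t) ≤ sK κ t)
    (hP3u : ∀ t ∈ Ioc (0:ℝ) (1/2 : ℝ), sK κ t ≤ t * (1 + 2 * t))
    (hP4 : ∀ u ∈ Icc (0:ℝ) L, ∀ v ∈ Icc (0:ℝ) L, |sK κ u - sK κ v| ≤ M * |u - v|) :
    ∀ ε > 0, ∃ vbar > 0, ∀ D ∈ Set.Icc (lam * L) L, ∀ a ∈ Set.Ioo (0:ℝ) D,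
      vKND κ N D a < vbar →
      |a / (kD κ N D * vKND κ N D a) ^ (1 / N) - 1| ≤ ε := by
  intro ε hε
  have hN0 : (0:ℝ) < N := by linarith
  have hN1 : (0:ℝ) ≤ N - 1 := by linarith
  have hc₂ : 0 < c₂ := lt_of_lt_of_le hc₁ hc₁₂
  set ε' : ℝ := min ε (1/2) with hε'def
  have hε'0 : 0 < ε' := lt_min hε (by norm_num)
  have hε'le : ε' ≤ ε := min_le_left _ _
  have hε'half : ε' ≤ 1/2 := min_le_right _ _
  set lamL := lam * L with hlamLdef
  have hlamL0 : 0 < lamL := mul_pos hlam0 hL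
  have hlamLL : lamL ≤ L := by
    have := mul_le_mul_of_nonneg_right hlam1 hL.le
    rw [hlamLdef]; linarith
  set s₀ := c₁ * (lamL / 2) with hs₀def
  have hs₀0 : 0 < s₀ := by positivity
  set kmin := lamL / 2 * (c₁ * (lamL / 2)) ^ (N - 1) with hkmindef
  have hkmin0 : 0 < kmin := by positivity
  set kmax := L * (c₂ * L) ^ (N - 1) with hkmaxdef
  have hkmax0 : 0 < kmax := by positivity
  obtain ⟨δ, hδ0, hδhalf, hδlamL, hδM, hδq, hδc5, hδc6⟩ :=
    choose_delta N hN ε' s₀ kmin M lamL hε'0 hs₀0 hkmin0 hM hlamL0 c₂ hc₂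
  set qδ := δ * (c₂ * δ) ^ (N-1) / kmin with hqδdef
  have hqδ0 : 0 ≤ qδ := by positivity
  set uδ := δ ^ N * ((1 + M * δ / s₀) * (1 + 2 * δ)) ^ (N-1) / (kmin * (1 - qδ)) with huδdef
  have huδ0 : 0 ≤ uδ := by
    apply div_nonneg (by positivity)
    have : (0:ℝ) < 1 - qδ := by linarith
    positivity
  set Amin := δ * (c₁ / c₂) ^ (N-1) with hAmindef
  have hAmin0 : 0 < Amin := by positivity
  set Bmax := kmax / (c₁ * δ) ^ (N-1) with hBmaxdef
  have hBmax0 : 0 < Bmax := by positivity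
  refine ⟨Amin / (Amin + Bmax), by positivity, ?_⟩
  set vbar := Amin / (Amin + Bmax) with hvbardef
  rintro D ⟨hD1, hD2⟩ a ⟨ha0, haD⟩ hv
  have hD0 : 0 < D := lt_of_lt_of_le hlamL0 hD1
  have haL : a < L := lt_of_lt_of_le haD hD2
  -- basic positivity of sK
  have hsnn : ∀ t ∈ Icc (0:ℝ) L, 0 ≤ sK κ t := by
    intro t ht
    exact le_trans (mul_nonneg hc₁.le ht.1) (hP2l t ht)
  have hspos : ∀ t, 0 < t → t ≤ L → 0 < sK κ t := by
    intro t h1 h2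
    exact lt_of_lt_of_le (by positivity) (hP2l t ⟨h1.le, h2⟩)
  have hsDa_pos : 0 < sK κ (D - a) := hspos _ (by linarith) (by linarith)
  have hsa_pos : 0 < sK κ a := hspos _ ha0 haL.le
  -- continuity / integrability
  have hcontS : Continuous (fun t => sK κ t ^ (N-1)) :=
    hcont.rpow_const (fun x => Or.inr hN1)
  have hcontA : Continuous (fun y => (sK κ (D - y) / sK κ (D - a)) ^ (N-1)) :=
    (((hcont.comp (continuous_const.sub continuous_id)).div_const _)).rpow_const
      (fun x => Or.inr hN1)
  have hcontB : Continuous (fun y => (sK κ y / sK κ a) ^ (N-1)) :=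
    ((hcont.div_const _)).rpow_const (fun x => Or.inr hN1)
  set A := ∫ y in (0:ℝ)..a, (sK κ (D - y) / sK κ (D - a)) ^ (N-1) with hAdef
  set B := ∫ y in a..D, (sK κ y / sK κ a) ^ (N-1) with hBdef
  set ka := ∫ t in (0:ℝ)..a, sK κ t ^ (N-1) with hkadef
  set kd := kD κ N D with hkddef
  -- volume identity
  have hfK : fKND κ N D a = (A + B)⁻¹ := rfl
  have hv_eq : vKND κ N D a = (A + B)⁻¹ * A := by
    rw [vKND]
    have hcongr : EqOn (fun x => hKND κ N D a x)
        (fun x => fKND κ N D a * (sK κ (D - x) / sK κ (D - a)) ^ (N-1)) (uIcc 0 a) := by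
      intro x hx
      rw [uIcc_of_le ha0.le] at hx
      simp only [hKND, if_pos hx.2]
    rw [intervalIntegral.integral_congr hcongr, intervalIntegral.integral_const_mul, hfK]
  -- general lower bound on A
  have hrat_gen : ∀ x ∈ Icc (0:ℝ) a, (c₁/c₂) ^ (N-1) ≤ (sK κ (D - x) / sK κ (D - a)) ^ (N-1) := by
    intro x hx
    apply Real.rpow_le_rpow (by positivity) _ hN1
    rw [div_le_div_iff₀ hc₂ hsDa_pos]
    have h1 := hP2u (D - a) ⟨by linarith, by linarith⟩
    have h2 := hP2l (D - x) ⟨by linarith [hx.1, hx.2], by linarith [hx.1]⟩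
    have p1 := mul_le_mul_of_nonneg_left h1 hc₁.le
    have p2 := mul_le_mul_of_nonneg_left h2 hc₂.le
    have p3 : c₁ * (c₂ * (D - a)) ≤ c₁ * (c₂ * (D - x)) :=
      mul_le_mul_of_nonneg_left (mul_le_mul_of_nonneg_left (by linarith [hx.2]) hc₂.le) hc₁.le
    linarith only [p1, p2, p3]
  have hA_lb_gen : a * ((c₁/c₂) ^ (N-1)) ≤ A := by
    have := const_le_integral ha0.le (hcontA.intervalIntegrable _ _) hrat_gen
    simpa using this
  have hA_pos : 0 < A := lt_of_lt_of_le (by positivity) hA_lb_gen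
  have hsplit : ka + (∫ t in a..D, sK κ t ^ (N-1)) = kd :=
    intervalIntegral.integral_add_adjacent_intervals
      (hcontS.intervalIntegrable _ _) (hcontS.intervalIntegrable _ _)
  have hB_eq : B = (kd - ka) / (sK κ a) ^ (N-1) := by
    have hcongr : EqOn (fun y => (sK κ y / sK κ a) ^ (N-1))
        (fun y => sK κ y ^ (N-1) / sK κ a ^ (N-1)) (uIcc a D) := by
      intro y hy
      rw [uIcc_of_le haD.le] at hy
      exact Real.div_rpow (hsnn y ⟨by linarith [hy.1], by linarith [hy.2]⟩)
        (hsnn a ⟨ha0.le, haL.le⟩) _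
    rw [hBdef, intervalIntegral.integral_congr hcongr, intervalIntegral.integral_div]
    congr 1
    linarith [hsplit]
  have hkd_ub : kd ≤ kmax := by
    have hpt : ∀ t ∈ Icc (0:ℝ) D, sK κ t ^ (N-1) ≤ (c₂ * D) ^ (N-1) := by
      intro t ht
      apply Real.rpow_le_rpow (hsnn t ⟨ht.1, le_trans ht.2 hD2⟩) _ hN1
      exact le_trans (hP2u t ⟨ht.1, le_trans ht.2 hD2⟩) (mul_le_mul_of_nonneg_left ht.2 hc₂.le)
    have h1 := integral_le_const hD0.le (hcontS.intervalIntegrable _ _) hpt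
    simp only [sub_zero] at h1
    calc kd ≤ D * (c₂ * D) ^ (N-1) := h1
      _ ≤ kmax := by
        rw [hkmaxdef]
        exact mul_le_mul hD2 (Real.rpow_le_rpow (mul_nonneg hc₂.le hD0.le)
          (mul_le_mul_of_nonneg_left hD2 hc₂.le) hN1) (Real.rpow_nonneg (mul_nonneg hc₂.le hD0.le) _) hL.le
  have hkd_lb : kmin ≤ kd := by
    have hsplit2 : (∫ t in (0:ℝ)..(D/2), sK κ t ^ (N-1))
        + (∫ t in (D/2)..D, sK κ t ^ (N-1)) = kd :=
      intervalIntegral.integral_add_adjacent_intervals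
        (hcontS.intervalIntegrable _ _) (hcontS.intervalIntegrable _ _)
    have h1 : 0 ≤ ∫ t in (0:ℝ)..(D/2), sK κ t ^ (N-1) :=
      intervalIntegral.integral_nonneg (by linarith)
        (fun u hu => Real.rpow_nonneg (hsnn u ⟨hu.1, by linarith [hu.2]⟩) _)
    have hpt : ∀ t ∈ Icc (D/2) D, (c₁ * (D/2)) ^ (N-1) ≤ sK κ t ^ (N-1) := by
      intro t ht
      apply Real.rpow_le_rpow (by positivity) _ hN1
      exact le_trans (mul_le_mul_of_nonneg_left ht.1 hc₁.le)
        (hP2l t ⟨by linarith [ht.1], le_trans ht.2 hD2⟩)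
    have h2 := const_le_integral (by linarith : D/2 ≤ D) (hcontS.intervalIntegrable _ _) hpt
    have h3 : kmin ≤ (D - D/2) * (c₁ * (D/2)) ^ (N-1) := by
      rw [hkmindef, show D - D/2 = D/2 from by ring]
      exact mul_le_mul (by linarith)
        (Real.rpow_le_rpow (mul_nonneg hc₁.le (by linarith)) (mul_le_mul_of_nonneg_left (by linarith) hc₁.le) hN1)
        (Real.rpow_nonneg (mul_nonneg hc₁.le (by linarith)) _) (by linarith)
    linarith
  have hkd_pos : 0 < kd := lt_of_lt_of_le hkmin0 hkd_lb
  have hka_nn : 0 ≤ ka :=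
    intervalIntegral.integral_nonneg ha0.le
      (fun u hu => Real.rpow_nonneg (hsnn u ⟨hu.1, by linarith [hu.2]⟩) _)
  have hkdka_pos : 0 < kd - ka := by
    have hpt : ∀ t ∈ Icc a D, (c₁ * a) ^ (N-1) ≤ sK κ t ^ (N-1) := by
      intro t ht
      apply Real.rpow_le_rpow (by positivity) _ hN1
      exact le_trans (mul_le_mul_of_nonneg_left ht.1 hc₁.le)
        (hP2l t ⟨by linarith [ht.1], le_trans ht.2 hD2⟩)
    have h2 := const_le_integral haD.le (hcontS.intervalIntegrable _ _) hpt
    have h4 : 0 < (D - a) * (c₁ * a) ^ (N-1) := by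
      have h5 : 0 < (c₁ * a) ^ (N-1) := Real.rpow_pos_of_pos (mul_pos hc₁ ha0) _
      exact mul_pos (by linarith) h5
    linarith [hsplit]
  have hsa_pow_pos : 0 < sK κ a ^ (N-1) := Real.rpow_pos_of_pos hsa_pos _
  have hB_pos : 0 < B := by
    rw [hB_eq]; positivity
  have hAB_pos : 0 < A + B := by linarith
  have hv_pos : 0 < vKND κ N D a := by
    rw [hv_eq]; positivity
  -- v small forces a small
  have haδ : a ≤ δ := by
    by_contra hcon
    push_neg at hcon
    have hA_lb : Amin ≤ A := by
      refine le_trans ?_ hA_lb_gen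
      rw [hAmindef]
      exact mul_le_mul_of_nonneg_right hcon.le (by positivity)
    have hB_ub : B ≤ Bmax := by
      rw [hB_eq, hBmaxdef]
      apply div_le_div₀ hkmax0.le (by linarith) (Real.rpow_pos_of_pos (by positivity) _)
      apply Real.rpow_le_rpow (by positivity) _ hN1
      exact le_trans (mul_le_mul_of_nonneg_left hcon.le hc₁.le) (hP2l a ⟨ha0.le, haL.le⟩)
    have hge : vbar ≤ vKND κ N D a := by
      rw [hv_eq, hvbardef, inv_mul_eq_div, div_le_div_iff₀ (by positivity) hAB_pos]
      have p1 := mul_le_mul_of_nonneg_right hA_lb hB_pos.le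
      have p2 := mul_le_mul_of_nonneg_left hB_ub hA_pos.le
      linarith only [p1, p2]
    linarith
  -- small-a estimates
  have hs₀le : s₀ ≤ sK κ (D - a) := by
    refine le_trans ?_ (hP2l (D - a) ⟨by linarith, by linarith⟩)
    rw [hs₀def]
    exact mul_le_mul_of_nonneg_left (by linarith) hc₁.le
  have hMδ : 0 ≤ M * δ / s₀ := by positivity
  have hids : M * δ / s₀ * s₀ = M * δ := div_mul_cancel₀ _ (ne_of_gt hs₀0)
  have hrat_lb : ∀ x ∈ Icc (0:ℝ) a, (1 - M * δ / s₀) ≤ sK κ (D - x) / sK κ (D - a) := by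
    intro x hx
    rw [le_div_iff₀ hsDa_pos]
    have h4 := hP4 (D - x) ⟨by linarith [hx.1, hx.2], by linarith [hx.1]⟩
      (D - a) ⟨by linarith, by linarith⟩
    rw [show D - x - (D - a) = a - x from by ring,
      abs_of_nonneg (show (0:ℝ) ≤ a - x from by linarith [hx.2]), abs_le] at h4
    have h5 : M * (a - x) ≤ M * δ := mul_le_mul_of_nonneg_left (by linarith [hx.1]) hM.le
    have p1 := mul_le_mul_of_nonneg_left hs₀le hMδ
    linarith only [p1, h4.1, h5, hids]
  have hrat_ub : ∀ x ∈ Icc (0:ℝ) a, sK κ (D - x) / sK κ (D - a) ≤ 1 + M * δ / s₀ := by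
    intro x hx
    rw [div_le_iff₀ hsDa_pos]
    have h4 := hP4 (D - x) ⟨by linarith [hx.1, hx.2], by linarith [hx.1]⟩
      (D - a) ⟨by linarith, by linarith⟩
    rw [show D - x - (D - a) = a - x from by ring,
      abs_of_nonneg (show (0:ℝ) ≤ a - x from by linarith [hx.2]), abs_le] at h4
    have h5 : M * (a - x) ≤ M * δ := mul_le_mul_of_nonneg_left (by linarith [hx.1]) hM.le
    have p1 := mul_le_mul_of_nonneg_left hs₀le hMδ
    linarith only [p1, h4.2, h5, hids]
  have hA_lb2 : a * (1 - M * δ / s₀) ^ (N-1) ≤ A := by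
    have hpt : ∀ x ∈ Icc (0:ℝ) a,
        (1 - M * δ / s₀) ^ (N-1) ≤ (sK κ (D - x) / sK κ (D - a)) ^ (N-1) :=
      fun x hx => Real.rpow_le_rpow (by linarith) (hrat_lb x hx) hN1
    have := const_le_integral ha0.le (hcontA.intervalIntegrable _ _) hpt
    simpa using this
  have hA_ub2 : A ≤ a * (1 + M * δ / s₀) ^ (N-1) := by
    have hpt : ∀ x ∈ Icc (0:ℝ) a,
        (sK κ (D - x) / sK κ (D - a)) ^ (N-1) ≤ (1 + M * δ / s₀) ^ (N-1) :=
      fun x hx => Real.rpow_le_rpow (le_trans (by linarith) (hrat_lb x hx)) (hrat_ub x hx) hN1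
    have := integral_le_const ha0.le (hcontA.intervalIntegrable _ _) hpt
    simpa using this
  have ha_half : a ∈ Ioc (0:ℝ) (1/2) := ⟨ha0, by linarith⟩
  have hsa_l : a * (1 - δ) ≤ sK κ a :=
    le_trans (mul_le_mul_of_nonneg_left (by linarith) ha0.le) (hP3l a ha_half)
  have hsa_u : sK κ a ≤ a * (1 + 2*δ) :=
    le_trans (hP3u a ha_half) (mul_le_mul_of_nonneg_left (by linarith) ha0.le)
  have hsa_pow_l : a ^ (N-1) * (1 - δ) ^ (N-1) ≤ sK κ a ^ (N-1) := by
    rw [← Real.mul_rpow ha0.le (by linarith)]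
    exact Real.rpow_le_rpow (mul_nonneg ha0.le (by linarith)) hsa_l hN1
  have hsa_pow_u : sK κ a ^ (N-1) ≤ a ^ (N-1) * (1 + 2*δ) ^ (N-1) := by
    rw [← Real.mul_rpow ha0.le (by linarith)]
    exact Real.rpow_le_rpow (hsnn a ⟨ha0.le, haL.le⟩) hsa_u hN1
  have hka_ub : ka ≤ qδ * kmin := by
    have hpt : ∀ t ∈ Icc (0:ℝ) a, sK κ t ^ (N-1) ≤ (c₂ * a) ^ (N-1) := by
      intro t ht
      apply Real.rpow_le_rpow (hsnn t ⟨ht.1, by linarith [ht.2]⟩) _ hN1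
      exact le_trans (hP2u t ⟨ht.1, by linarith [ht.2]⟩) (mul_le_mul_of_nonneg_left ht.2 hc₂.le)
    have h1 := integral_le_const ha0.le (hcontS.intervalIntegrable _ _) hpt
    simp only [sub_zero] at h1
    have h2 : a * (c₂ * a) ^ (N-1) ≤ δ * (c₂ * δ) ^ (N-1) :=
      mul_le_mul haδ (Real.rpow_le_rpow (mul_nonneg hc₂.le ha0.le) (mul_le_mul_of_nonneg_left haδ hc₂.le) hN1)
        (Real.rpow_nonneg (mul_nonneg hc₂.le ha0.le) _) hδ0.le
    have h3 : qδ * kmin = δ * (c₂ * δ) ^ (N-1) := by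
      rw [hqδdef]; field_simp
    linarith
  have hqδhalf' : qδ ≤ 1/2 := hδq
  have h1q : (0:ℝ) < 1 - qδ := by linarith
  have ha_pow : a ^ N = a * a ^ (N-1) := by
    have h := Real.rpow_add ha0 1 (N-1)
    rw [show (1:ℝ) + (N-1) = N from by ring, Real.rpow_one] at h
    exact h
  have haN_le : a ^ N ≤ δ ^ N := Real.rpow_le_rpow ha0.le haδ hN0.le
  have haN_pos : 0 < a ^ N := Real.rpow_pos_of_pos ha0 N
  have hapow1_pos : 0 < a ^ (N-1) := Real.rpow_pos_of_pos ha0 (N-1)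
  have hδpow_pos : 0 < (1 + 2*δ) ^ (N-1) := Real.rpow_pos_of_pos (by linarith) _
  have hA_le_uB : A ≤ uδ * B := by
    have hBlb : kmin * (1 - qδ) / (a ^ (N-1) * (1 + 2*δ) ^ (N-1)) ≤ B := by
      rw [hB_eq]
      have pk := mul_le_mul_of_nonneg_left hqδhalf' (le_of_lt hkmin0)
      exact div_le_div₀ (by linarith) (by linarith only [hkd_lb, hka_ub, pk]) hsa_pow_pos hsa_pow_u
    refine le_trans ?_ (mul_le_mul_of_nonneg_left hBlb huδ0)
    have heq : uδ * (kmin * (1 - qδ) / (a ^ (N-1) * (1 + 2*δ) ^ (N-1)))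
        = δ ^ N * (1 + M * δ / s₀) ^ (N-1) / a ^ (N-1) := by
      rw [huδdef, Real.mul_rpow (by linarith) (by linarith)]
      field_simp
    rw [heq, le_div_iff₀ hapow1_pos]
    calc A * a ^ (N-1) ≤ (a * (1 + M * δ / s₀) ^ (N-1)) * a ^ (N-1) :=
          mul_le_mul_of_nonneg_right hA_ub2 hapow1_pos.le
      _ = a ^ N * (1 + M * δ / s₀) ^ (N-1) := by rw [ha_pow]; ring
      _ ≤ δ ^ N * (1 + M * δ / s₀) ^ (N-1) :=
          mul_le_mul_of_nonneg_right haN_le (by positivity)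
  have hX : a ^ N * (A + B) ≤ (1 + ε') * kd * A := by
    have h1 : A + B ≤ (1 + uδ) * B := by linarith only [hA_le_uB]
    have h2 : B ≤ kd / (a ^ (N-1) * (1 - δ) ^ (N-1)) := by
      rw [hB_eq]
      exact div_le_div₀ hkd_pos.le (by linarith)
        (mul_pos hapow1_pos (Real.rpow_pos_of_pos (by linarith) _)) hsa_pow_l
    have hc5' : 1 + uδ ≤ (1 + ε') * ((1 - δ) ^ (N-1) * (1 - M * δ / s₀) ^ (N-1)) := by
      rw [← Real.mul_rpow (by linarith) (by linarith)]
      exact hδc5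
    have hδ1_pos : (0:ℝ) < (1 - δ) ^ (N-1) := Real.rpow_pos_of_pos (by linarith) _
    calc a ^ N * (A + B) ≤ a ^ N * ((1 + uδ) * B) :=
          mul_le_mul_of_nonneg_left h1 haN_pos.le
      _ ≤ a ^ N * ((1 + uδ) * (kd / (a ^ (N-1) * (1 - δ) ^ (N-1)))) := by
          apply mul_le_mul_of_nonneg_left (mul_le_mul_of_nonneg_left h2 (by linarith)) haN_pos.le
      _ = a * ((1 + uδ) * kd / (1 - δ) ^ (N-1)) := by
          rw [ha_pow]; field_simp
      _ ≤ a * ((1 + ε') * (1 - M * δ / s₀) ^ (N-1) * kd) := by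
          apply mul_le_mul_of_nonneg_left _ ha0.le
          rw [div_le_iff₀ hδ1_pos]
          have p1 := mul_le_mul_of_nonneg_right hc5' hkd_pos.le
          linarith only [p1]
      _ ≤ (1 + ε') * kd * A := by
          have p1 := mul_le_mul_of_nonneg_left hA_lb2
            (show (0:ℝ) ≤ (1 + ε') * kd from mul_nonneg (by linarith) hkd_pos.le)
          linarith only [p1]
  have hup : a ^ N ≤ (1 + ε') * (kd * vKND κ N D a) := by
    rw [hv_eq]
    have hm := mul_le_mul_of_nonneg_right hX (inv_nonneg.2 hAB_pos.le)
    calc a ^ N = a ^ N * (A + B) * (A + B)⁻¹ := by field_simp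
      _ ≤ (1 + ε') * kd * A * (A + B)⁻¹ := hm
      _ = (1 + ε') * (kd * ((A + B)⁻¹ * A)) := by ring
  have hY : (1 - ε') * kd * A ≤ a ^ N * (A + B) := by
    have h2 : kd * (1 - qδ) / (a ^ (N-1) * (1 + 2*δ) ^ (N-1)) ≤ B := by
      rw [hB_eq]
      have pk := mul_le_mul_of_nonneg_left hkd_lb hqδ0
      exact div_le_div₀ (by linarith) (by linarith only [hka_ub, pk]) hsa_pow_pos hsa_pow_u
    have hc6' : (1 - ε') * ((1 + 2*δ) ^ (N-1) * (1 + M * δ / s₀) ^ (N-1)) ≤ 1 - qδ := by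
      rw [← Real.mul_rpow (by linarith) (by linarith)]
      exact hδc6
    calc (1 - ε') * kd * A ≤ (1 - ε') * kd * (a * (1 + M * δ / s₀) ^ (N-1)) := by
          apply mul_le_mul_of_nonneg_left hA_ub2 (mul_nonneg (by linarith) hkd_pos.le)
      _ ≤ a ^ N * (kd * (1 - qδ) / (a ^ (N-1) * (1 + 2*δ) ^ (N-1))) := by
          rw [show a ^ N * (kd * (1 - qδ) / (a ^ (N-1) * (1 + 2*δ) ^ (N-1)))
              = a * (kd * (1 - qδ)) / (1 + 2*δ) ^ (N-1) from by rw [ha_pow]; field_simp]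
          rw [le_div_iff₀ hδpow_pos]
          have p1 := mul_le_mul_of_nonneg_left hc6'
            (show (0:ℝ) ≤ a * kd from mul_nonneg ha0.le hkd_pos.le)
          linarith only [p1]
      _ ≤ a ^ N * B := mul_le_mul_of_nonneg_left h2 haN_pos.le
      _ ≤ a ^ N * (A + B) := by linarith only [mul_pos haN_pos hA_pos]
  have hlow : (1 - ε') * (kd * vKND κ N D a) ≤ a ^ N := by
    rw [hv_eq]
    have hm := mul_le_mul_of_nonneg_right hY (inv_nonneg.2 hAB_pos.le)
    calc (1 - ε') * (kd * ((A + B)⁻¹ * A)) = (1 - ε') * kd * A * (A + B)⁻¹ := by ring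
      _ ≤ a ^ N * (A + B) * (A + B)⁻¹ := hm
      _ = a ^ N := by field_simp
  -- conclusion
  have hw_pos : 0 < kd * vKND κ N D a := mul_pos hkd_pos hv_pos
  set w := kd * vKND κ N D a with hwdef
  have hr_eq : a / w ^ (1/N) = (a ^ N / w) ^ (1/N) := by
    rw [Real.div_rpow (by positivity) hw_pos.le]
    congr 1
    rw [← Real.rpow_mul ha0.le, mul_one_div_cancel (ne_of_gt hN0), Real.rpow_one]
  have hrl : 1 - ε' ≤ a ^ N / w := (le_div_iff₀ hw_pos).2 (by linarith)
  have hru : a ^ N / w ≤ 1 + ε' := (div_le_iff₀ hw_pos).2 (by linarith)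
  have h1N : 1/N ≤ 1 := by rw [div_le_one hN0]; linarith
  have h1N0 : (0:ℝ) ≤ 1/N := by positivity
  have hfin_u : (a ^ N / w) ^ (1/N) ≤ 1 + ε' := by
    calc (a ^ N / w) ^ (1/N) ≤ (1 + ε') ^ (1/N) :=
          Real.rpow_le_rpow (by positivity) hru h1N0
      _ ≤ (1 + ε') ^ (1:ℝ) := Real.rpow_le_rpow_of_exponent_le (by linarith) h1N
      _ = 1 + ε' := Real.rpow_one _
  have hfin_l : 1 - ε' ≤ (a ^ N / w) ^ (1/N) := by
    calc (1 - ε' : ℝ) = (1 - ε') ^ (1:ℝ) := (Real.rpow_one _).symm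
      _ ≤ (1 - ε') ^ (1/N) :=
          Real.rpow_le_rpow_of_exponent_ge (by linarith) (by linarith) h1N
      _ ≤ (a ^ N / w) ^ (1/N) := Real.rpow_le_rpow (by linarith) hrl h1N0
  rw [hr_eq, abs_le]
  constructor
  · linarith
  · linarith

/-- the inverse of the volume map satisfies
`a_{K,N,D}(v) = k_D^(1/N) v^(1/N) (1+o(1))` as `v → 0⁺`, uniformly in `D ∈ [λL, L]`. -/
theorem stmt3 (N κ lam L : ℝ) (hN : 1 < N) (hκ : κ = -1 ∨ κ = 0 ∨ κ = 1)
    (hlam : lam ∈ Set.Ioc (0:ℝ) 1) (hL : 0 < L) (hLpi : κ = 1 → L < Real.pi) :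
    ∀ ε > 0, ∃ vbar > 0, ∀ D ∈ Set.Icc (lam * L) L, ∀ a ∈ Set.Ioo (0:ℝ) D,
      vKND κ N D a < vbar →
      |a / (kD κ N D * vKND κ N D a) ^ (1 / N) - 1| ≤ ε := by
  rcases hκ with h | h | h
  · -- κ = -1 : hyperbolic case
    subst h
    have hM : (0:ℝ) < (Real.sinh L + Real.cosh L) * Real.cosh L := by
      have h1 : 0 ≤ Real.sinh L := Real.sinh_nonneg_iff.2 hL.le
      have h2 : 0 < Real.cosh L := Real.cosh_pos L
      nlinarith
    apply core (-1) N lam L 1 (Real.cosh L) ((Real.sinh L + Real.cosh L) * Real.cosh L) hN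
      hlam.1 hlam.2 hL one_pos (Real.one_le_cosh L) hM
    · rw [sK_neg_one]; exact Real.continuous_sinh
    · intro t ht
      rw [sK_neg_one, one_mul]
      exact Real.self_le_sinh_iff.2 ht.1
    · intro t ht
      rw [sK_neg_one]
      calc Real.sinh t ≤ t * Real.cosh t := sinh_le_mul_cosh ht.1
        _ ≤ Real.cosh L * t := by
            rw [mul_comm]
            apply mul_le_mul_of_nonneg_right _ ht.1
            rw [Real.cosh_le_cosh, abs_of_nonneg ht.1, abs_of_nonneg (ht.1.trans ht.2)]
            exact ht.2
    · intro t ht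
      rw [sK_neg_one]
      have h1 : t ≤ Real.sinh t := Real.self_le_sinh_iff.2 ht.1.le
      nlinarith [ht.1.le, ht.2]
    · intro t ht
      rw [sK_neg_one]
      have h1 : Real.sinh t ≤ t * Real.cosh t := sinh_le_mul_cosh ht.1.le
      have h2 : Real.cosh t ≤ 1 / (1 - t) := cosh_le_inv_one_sub ht.1.le (by linarith [ht.2])
      have h3 : t * Real.cosh t ≤ t * (1 / (1 - t)) :=
        mul_le_mul_of_nonneg_left h2 ht.1.le
      have h4 : t * (1 / (1 - t)) ≤ t * (1 + 2 * t) := by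
        apply mul_le_mul_of_nonneg_left _ ht.1.le
        rw [div_le_iff₀ (show (0:ℝ) < 1 - t from by linarith [ht.2])]
        nlinarith [ht.1.le, ht.2, mul_le_mul_of_nonneg_left ht.2 ht.1.le]
      linarith
    · intro u hu v hv
      rw [sK_neg_one]
      exact sinh_lip hu hv
  · -- κ = 0 : flat case
    subst h
    apply core 0 N lam L 1 1 1 hN hlam.1 hlam.2 hL one_pos le_rfl one_pos
    · rw [sK_zero]; exact continuous_id
    · intro t ht; rw [sK_zero]; simp
    · intro t ht; rw [sK_zero]; simp
    · intro t ht; rw [sK_zero]; nlinarith [ht.1.le]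
    · intro t ht; rw [sK_zero]; nlinarith [ht.1.le, ht.2]
    · intro u hu v hv; rw [sK_zero]; simp
  · -- κ = 1 : spherical case
    subst h
    have hLπ : L < Real.pi := hLpi rfl
    have hsinL : 0 < Real.sin L := Real.sin_pos_of_pos_of_lt_pi hL hLπ
    apply core 1 N lam L (Real.sin L / L) 1 1 hN hlam.1 hlam.2 hL (by positivity)
      ((div_le_one hL).2 (Real.sin_le hL.le)) one_pos
    · rw [sK_one]; exact Real.continuous_sin
    · intro t ht
      rw [sK_one]
      exact sin_lb hL hLπ ht
    · intro t ht
      rw [sK_one, one_mul]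
      exact Real.sin_le ht.1
    · intro t ht
      rw [sK_one]
      have h1 := Real.sin_gt_sub_cube ht.1
      nlinarith [ht.1.le, ht.2, mul_le_mul_of_nonneg_left ht.2 (sq_nonneg t)]
    · intro t ht
      rw [sK_one]
      have h1 : Real.sin t ≤ t := Real.sin_le ht.1.le
      nlinarith [ht.1.le]
    · intro u hu v hv
      rw [sK_one, one_mul]
      exact sin_lip u v
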